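/- arXiv:2506.01168 — 6 statements merged into one kernel-verified Lean document; each statement's English description precedes it below -/
import Mathlib

section
/- Let p(κ,ρ) = 8κ(κ+1)ρ⁷ - (23κ² + 18κ + 7)ρ⁶ + 2(5κ² - 14κ - 7)ρ⁵ + (31κ² + 50κ + 15)ρ⁴ - 4(11κ² - 4κ - 11)ρ³ + (23κ² - 30κ + 23)ρ² - 2(κ-1)(3κ+1)ρ + (κ-1)². For every κ ≥ 9 + 4√5, p(κ, ρ) < 0 at ρ = 1 - √(2/κ). -/
noncomputable def p (κ ρ : ℝ) : ℝ :=
  8 * κ * (κ + 1) * ρ^7 - (23 * κ^2 + 18 * κ + 7) * ρ^6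
    + 2 * (5 * κ^2 - 14 * κ - 7) * ρ^5 + (31 * κ^2 + 50 * κ + 15) * ρ^4
    - 4 * (11 * κ^2 - 4 * κ - 11) * ρ^3 + (23 * κ^2 - 30 * κ + 23) * ρ^2
    - 2 * (κ - 1) * (3 * κ + 1) * ρ + (κ - 1)^2

theorem stmt_4 (κ : ℝ) (hκ : κ ≥ 9 + 4 * Real.sqrt 5) :
    p κ (1 - Real.sqrt (2 / κ)) < 0 := by
  have h5 : Real.sqrt 5 ≥ 2 := by
    nlinarith [Real.sq_sqrt (by norm_num : (5:ℝ) ≥ 0), Real.sqrt_nonneg 5]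
  have hκ17 : κ ≥ 17 := by linarith
  have hκpos : (0:ℝ) < κ := by linarith
  set t := Real.sqrt (2 / κ) with ht
  have htpos : 0 < t := Real.sqrt_pos.mpr (by positivity)
  have ht2 : t ^ 2 = 2 / κ := Real.sq_sqrt (by positivity)
  have hkt : κ * t ^ 2 = 2 := by rw [ht2]; field_simp
  have htlt : t < 7 / 20 := by
    rw [ht, show (7:ℝ)/20 = Real.sqrt ((7/20)^2) by
      rw [Real.sqrt_sq (by norm_num)]]
    apply Real.sqrt_lt_sqrt (by positivity)
    rw [div_lt_iff₀ hκpos]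
    nlinarith
  have key : p κ (1 - t) * t ^ 4 =
      t ^ 6 * (-28 + 80 * t - 84 * t ^ 2 + 40 * t ^ 3 - 7 * t ^ 4) := by
    unfold p
    linear_combination (-32*t^4 + 64*t^5 - 14*t^6 - 48*t^7 + 38*t^8 - 8*t^9
      + κ * (16*t^6 - 40*t^7 + 33*t^8 - 8*t^9)) * hkt
  have hq : t ^ 6 * (-28 + 80 * t - 84 * t ^ 2 + 40 * t ^ 3 - 7 * t ^ 4) < 0 := by
    apply mul_neg_of_pos_of_neg (by positivity)
    nlinarith [sq_nonneg t, pow_pos htpos 2, pow_pos htpos 3, pow_pos htpos 4]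
  have ht4 : (0:ℝ) < t ^ 4 := by positivity
  have h1 : p κ (1 - t) * t ^ 4 < 0 := key ▸ hq
  exact neg_of_mul_neg_right (by linarith [h1]) ht4.le
end

section
/- A monic real quadratic z² + a₁z + a₀ has both complex roots of modulus at most ρ > 0 if and only if ρ² + a₁ρ + a₀ ≥ 0, ρ² - a₁ρ + a₀ ≥ 0, and |a₀| ≤ ρ². -/
theorem stmt_9 (a₀ a₁ ρ : ℝ) (hρ : 0 < ρ) :
    (∀ z : ℂ, z^2 + (a₁ : ℂ) * z + (a₀ : ℂ) = 0 → ‖z‖ ≤ ρ) ↔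
      (ρ^2 + a₁ * ρ + a₀ ≥ 0 ∧ ρ^2 - a₁ * ρ + a₀ ≥ 0 ∧ |a₀| ≤ ρ^2) := by
  constructor
  · intro h
    obtain ⟨s, hs⟩ : ∃ s : ℂ, s ^ 2 = (a₁ : ℂ)^2 - 4 * a₀ :=
      IsAlgClosed.exists_pow_nat_eq _ (n := 2) (by norm_num)
    have hr₁ : ((-(a₁:ℂ) + s)/2)^2 + (a₁:ℂ) * ((-(a₁:ℂ) + s)/2) + a₀ = 0 := by
      linear_combination hs/4
    have hr₂ : ((-(a₁:ℂ) - s)/2)^2 + (a₁:ℂ) * ((-(a₁:ℂ) - s)/2) + a₀ = 0 := by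
      linear_combination hs/4
    have hb₁ := h _ hr₁
    have hb₂ := h _ hr₂
    have hprod : (a₀ : ℂ) = ((-(a₁:ℂ) + s)/2) * ((-(a₁:ℂ) - s)/2) := by
      linear_combination hs/4
    have h3 : |a₀| ≤ ρ^2 := by
      have heq : |a₀| = ‖(-(a₁:ℂ) + s)/2‖ * ‖(-(a₁:ℂ) - s)/2‖ := by
        rw [← Real.norm_eq_abs, ← Complex.norm_real, hprod, norm_mul]
      rw [heq]
      calc _ ≤ ρ * ρ := mul_le_mul hb₁ hb₂ (norm_nonneg _) hρ.le
        _ = ρ^2 := by ring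
    refine ⟨?_, ?_, h3⟩
    all_goals {
      rcases le_or_gt 0 (a₁^2 - 4*a₀) with hD | hD
      · set d : ℝ := Real.sqrt (a₁^2 - 4*a₀) with hddef
        have hd : d^2 = a₁^2 - 4*a₀ := Real.sq_sqrt hD
        have hdc : ((d:ℂ))^2 = (a₁:ℂ)^2 - 4*(a₀:ℂ) := by exact_mod_cast congrArg (Complex.ofReal) hd
        have ht₁ : ‖(((-a₁ + d)/2 : ℝ) : ℂ)‖ ≤ ρ := by
          apply h; push_cast; linear_combination hdc/4
        have ht₂ : ‖(((-a₁ - d)/2 : ℝ) : ℂ)‖ ≤ ρ := by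
          apply h; push_cast; linear_combination hdc/4
        rw [Complex.norm_real, Real.norm_eq_abs] at ht₁ ht₂
        have h1' := abs_le.mp ht₁
        have h2' := abs_le.mp ht₂
        nlinarith [mul_nonneg (sub_nonneg.2 h1'.2) (sub_nonneg.2 h2'.2),
          mul_nonneg (by linarith [h1'.1] : (0:ℝ) ≤ (-a₁+d)/2 + ρ)
            (by linarith [h2'.1] : (0:ℝ) ≤ (-a₁-d)/2 + ρ)]
      · nlinarith [sq_nonneg (ρ + a₁/2), sq_nonneg (ρ - a₁/2)] }
  · rintro ⟨h1, h2, h3⟩ z hz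
    have h3' := abs_le.mp h3
    have hzc : (starRingEnd ℂ z)^2 + (a₁:ℂ) * (starRingEnd ℂ z) + a₀ = 0 := by
      have := congrArg (starRingEnd ℂ) hz
      simpa [map_add, map_mul, map_pow, Complex.conj_ofReal] using this
    by_cases hreal : (starRingEnd ℂ) z = z
    · have hzre : z = (z.re : ℂ) := (Complex.conj_eq_iff_re.mp hreal).symm
      set t := z.re with htdef
      have ht : t^2 + a₁ * t + a₀ = 0 := by
        have h0 := hz
        rw [hzre] at h0
        exact_mod_cast (by exact_mod_cast h0 : ((t^2 + a₁*t + a₀ : ℝ) : ℂ) = 0)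
      have habs : ‖z‖ = |t| := by rw [hzre, Complex.norm_real, Real.norm_eq_abs]
      rw [habs, abs_le]
      constructor
      · by_contra hc
        push_neg at hc
        have hA : (0:ℝ) < -ρ - t := by linarith
        have key : (-ρ - t) * (a₁ + t - ρ) = ρ^2 - a₁*ρ + a₀ := by linear_combination -ht
        have hB : 0 ≤ a₁ + t - ρ := by nlinarith
        nlinarith [mul_nonneg hA.le hB, mul_nonneg hρ.le hB]
      · by_contra hc
        push_neg at hc
        have hA : (0:ℝ) < t - ρ := by linarith
        have key : (ρ - t) * (ρ + a₁ + t) = ρ^2 + a₁*ρ + a₀ := by linear_combination -ht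
        have hB : ρ + a₁ + t ≤ 0 := by nlinarith
        nlinarith [mul_nonneg hA.le (by linarith : (0:ℝ) ≤ -a₁ - t - ρ),
          mul_nonneg hρ.le (by linarith : (0:ℝ) ≤ -a₁ - t - ρ)]
    · have hsum : (starRingEnd ℂ) z + z = -(a₁:ℂ) := by
        have hdiff : ((starRingEnd ℂ) z - z) * ((starRingEnd ℂ) z + z + a₁) = 0 := by
          linear_combination hzc - hz
        rcases mul_eq_zero.mp hdiff with hcase | hcase
        · exact absurd (sub_eq_zero.mp hcase) hreal
        · linear_combination hcase
      have hnorm : (Complex.normSq z : ℂ) = (a₀ : ℂ) := by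
        rw [← Complex.mul_conj]
        linear_combination z * hsum - hz
      have hnr : Complex.normSq z = a₀ := by exact_mod_cast hnorm
      have hsq : ‖z‖ ^ 2 = a₀ := by rw [Complex.sq_norm, hnr]
      nlinarith [norm_nonneg z]
end

section
/- Let 0 < m ≤ L, κ = L/m, ρ ∈ (0,1), and define α = (1-ρ)²/m, β = (ρ/(κ-1))(1 - κ(1-3ρ)/(1+ρ)), η = (ρ/(κ-1))((1+ρ)/(1-ρ)² - κ/(1+ρ)) (requiring κ > 1). Let g(z) = -α((1+η)z - η)/((z-1)(z-β)). Then L·g(-ρ) = 1, m·g(ρ) = 1, and g'(ρ) = 0. -/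
theorem stmt_10 (m L ρ : ℝ) (hm : 0 < m) (hmL : m < L) (hρ0 : 0 < ρ) (hρ1 : ρ < 1)
    (κ α β η : ℝ) (hκ : κ = L / m)
    (hα : α = (1 - ρ)^2 / m)
    (hβ : β = (ρ / (κ - 1)) * (1 - κ * (1 - 3 * ρ) / (1 + ρ)))
    (hη : η = (ρ / (κ - 1)) * ((1 + ρ) / (1 - ρ)^2 - κ / (1 + ρ)))
    (g : ℝ → ℝ)
    (hg : g = fun z => -α * ((1 + η) * z - η) / ((z - 1) * (z - β)))
    (hβρ : ρ ≠ β) (hβρ' : -ρ ≠ β) :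
    L * g (-ρ) = 1 ∧ m * g ρ = 1 ∧ deriv g ρ = 0 := by
  have hm' : m ≠ 0 := ne_of_gt hm
  have hL : 0 < L := hm.trans hmL
  have hL' : L ≠ 0 := ne_of_gt hL
  have hLm : L - m ≠ 0 := by intro h; linarith
  have h1ρ : (1:ℝ) - ρ ≠ 0 := by intro h; linarith [sub_eq_zero.mp h]
  have h1ρ' : (1:ℝ) + ρ ≠ 0 := by positivity
  have hρ1' : ρ - 1 ≠ 0 := sub_ne_zero.mpr (ne_of_lt hρ1)
  have hρ1'' : -ρ - 1 ≠ 0 := by intro h; linarith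
  have hρβ : ρ - β ≠ 0 := sub_ne_zero.mpr hβρ
  have hρβ' : -ρ - β ≠ 0 := sub_ne_zero.mpr hβρ'
  have hκ1 : κ - 1 ≠ 0 := by
    rw [hκ]; have h2 : 1 < L / m := (one_lt_div hm).mpr hmL
    intro h; rw [sub_eq_zero] at h; linarith
  have hβ2 : β = ρ * (m * (1 + ρ) - L * (1 - 3 * ρ)) / ((L - m) * (1 + ρ)) := by
    rw [hβ, hκ]
    rw [div_sub' hm', div_div_eq_mul_div]
    field_simp
  have hη2 : η = ρ * (m * (1 + ρ)^2 - L * (1 - ρ)^2) / ((L - m) * (1 - ρ)^2 * (1 + ρ)) := by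
    rw [hη, hκ]
    rw [div_sub' hm', div_div_eq_mul_div]
    field_simp
  subst hg
  simp only
  refine ⟨?_, ?_, ?_⟩
  · rw [← mul_div_assoc, div_eq_one_iff_eq (mul_ne_zero hρ1'' hρβ')]
    rw [hα, hβ2, hη2]
    field_simp
    ring
  · rw [← mul_div_assoc, div_eq_one_iff_eq (mul_ne_zero hρ1' hρβ)]
    rw [hα, hβ2, hη2]
    field_simp
    ring
  · have hden : (ρ - 1) * (ρ - β) ≠ 0 := mul_ne_zero hρ1' hρβ
    have h1 : HasDerivAt (fun z : ℝ => -α * ((1 + η) * z - η)) (-α * (1 + η)) ρ := by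
      have := (((hasDerivAt_id ρ).const_mul (1 + η)).sub_const η).const_mul (-α)
      simpa using this
    have h2 : HasDerivAt (fun z : ℝ => (z - 1) * (z - β)) (1 * (ρ - β) + (ρ - 1) * 1) ρ :=
      ((hasDerivAt_id ρ).sub_const 1).mul ((hasDerivAt_id ρ).sub_const β)
    have h3 := h1.div h2 hden
    rw [(show (fun z : ℝ => -α * ((1 + η) * z - η) / ((z - 1) * (z - β))) = ((fun z : ℝ => -α * ((1 + η) * z - η)) / fun z : ℝ => (z - 1) * (z - β)) from rfl), h3.deriv, div_eq_zero_iff]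
    left
    rw [hβ2, hη2]
    field_simp
    ring
end

section
/- Let 0 < m ≤ L, κ = L/m > 1, and suppose (√κ - 1)/(√κ + 1) ≤ ρ ≤ (κ - 1)/(κ + 1) with 0 < ρ < 1. With α = (1-ρ)²/m, β = (ρ/(κ-1))(1 - κ(1-3ρ)/(1+ρ)), η = (ρ/(κ-1))((1+ρ)/(1-ρ)² - κ/(1+ρ)), the four Jury inequalities (1-ρ)(β-ρ) + α(ηρ - η + ρ)q ≥ 0, (1+ρ)(β+ρ) - α(ηρ + η + ρ)q ≥ 0, ρ² + β - αηq ≥ 0, and ρ² - β + αηq ≥ 0 hold for all q ∈ [m, L]. -/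
set_option maxHeartbeats 1000000 in
theorem stmt_12 (m L κ ρ α β η : ℝ) (hm : 0 < m) (hmL : m ≤ L)
    (hκ : κ = L / m) (hκ1 : 1 < κ)
    (hρlo : (Real.sqrt κ - 1) / (Real.sqrt κ + 1) ≤ ρ)
    (hρhi : ρ ≤ (κ - 1) / (κ + 1)) (hρ0 : 0 < ρ) (hρ1 : ρ < 1)
    (hα : α = (1 - ρ)^2 / m)
    (hβ : β = (ρ / (κ - 1)) * (1 - κ * (1 - 3 * ρ) / (1 + ρ)))
    (hη : η = (ρ / (κ - 1)) * ((1 + ρ) / (1 - ρ)^2 - κ / (1 + ρ))) :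
    ∀ q ∈ Set.Icc m L,
      (1 - ρ) * (β - ρ) + α * (η * ρ - η + ρ) * q ≥ 0 ∧
      (1 + ρ) * (β + ρ) - α * (η * ρ + η + ρ) * q ≥ 0 ∧
      ρ^2 + β - α * η * q ≥ 0 ∧
      ρ^2 - β + α * η * q ≥ 0 := by
  have hκ0 : (0:ℝ) < κ := lt_trans one_pos hκ1
  have hκ1' : (0:ℝ) < κ - 1 := by linarith
  have hρm : (0:ℝ) < 1 - ρ := by linarith
  have hρp : (0:ℝ) < 1 + ρ := by linarith
  have hLm : L = κ * m := by
    rw [hκ]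
    field_simp
  -- key inequality Q : κ(1-ρ) ≥ 1+ρ from the upper bound on ρ
  have hQ : 0 ≤ κ * (1 - ρ) - (1 + ρ) := by
    rw [le_div_iff₀ (by linarith : (0:ℝ) < κ + 1)] at hρhi
    nlinarith
  -- key inequality P : (1+ρ)² ≥ κ(1-ρ)² from the lower bound on ρ
  have hsk : Real.sqrt κ * Real.sqrt κ = κ := Real.mul_self_sqrt hκ0.le
  have hsk0 : 0 ≤ Real.sqrt κ := Real.sqrt_nonneg κ
  have h1 : Real.sqrt κ * (1 - ρ) ≤ 1 + ρ := by
    rw [div_le_iff₀ (by nlinarith : (0:ℝ) < Real.sqrt κ + 1)] at hρlo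
    nlinarith
  have hP : 0 ≤ (1 + ρ)^2 - κ * (1 - ρ)^2 := by
    nlinarith [mul_nonneg hsk0 hρm.le]
  intro q hq
  obtain ⟨hq1, hq2⟩ := hq
  have hq2' : q ≤ κ * m := hLm ▸ hq2
  have hden : (0:ℝ) < m * (κ - 1) * (1 + ρ) := by positivity
  subst hα hβ hη
  refine ⟨?_, ?_, ?_, ?_⟩
  · have heq : (1 - ρ) * ((ρ / (κ - 1)) * (1 - κ * (1 - 3 * ρ) / (1 + ρ)) - ρ) +
        (1 - ρ)^2 / m * ((ρ / (κ - 1)) * ((1 + ρ) / (1 - ρ)^2 - κ / (1 + ρ)) * ρ -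
          (ρ / (κ - 1)) * ((1 + ρ) / (1 - ρ)^2 - κ / (1 + ρ)) + ρ) * q =
        2 * ρ * (1 - ρ) * (κ * (1 - ρ) - (1 + ρ)) * (q - m) / (m * (κ - 1) * (1 + ρ)) := by
      field_simp
      ring
    rw [heq]
    apply div_nonneg _ hden.le
    have : 0 ≤ q - m := by linarith
    positivity
  · have heq : (1 + ρ) * ((ρ / (κ - 1)) * (1 - κ * (1 - 3 * ρ) / (1 + ρ)) + ρ) -
        (1 - ρ)^2 / m * ((ρ / (κ - 1)) * ((1 + ρ) / (1 - ρ)^2 - κ / (1 + ρ)) * ρ +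
          (ρ / (κ - 1)) * ((1 + ρ) / (1 - ρ)^2 - κ / (1 + ρ)) + ρ) * q =
        4 * ρ^2 * (κ * m - q) / (m * (κ - 1)) := by
      field_simp
      ring
    rw [heq]
    apply div_nonneg _ (by positivity)
    have : 0 ≤ κ * m - q := by linarith
    positivity
  · have heq : ρ^2 + (ρ / (κ - 1)) * (1 - κ * (1 - 3 * ρ) / (1 + ρ)) -
        (1 - ρ)^2 / m * ((ρ / (κ - 1)) * ((1 + ρ) / (1 - ρ)^2 - κ / (1 + ρ))) * q =
        ρ * ((1 - ρ) * (κ - 1) * (κ * (1 - ρ) - (1 + ρ)) * m +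
          ((1 + ρ)^2 - κ * (1 - ρ)^2) * (κ * m - q)) / (m * (κ - 1) * (1 + ρ)) := by
      field_simp
      ring
    rw [heq]
    apply div_nonneg _ hden.le
    have h2 : 0 ≤ κ * m - q := by linarith
    have h3 : 0 ≤ (1 - ρ) * (κ - 1) * (κ * (1 - ρ) - (1 + ρ)) * m := by positivity
    exact mul_nonneg hρ0.le (add_nonneg h3 (mul_nonneg hP h2))
  · have heq : ρ^2 - (ρ / (κ - 1)) * (1 - κ * (1 - 3 * ρ) / (1 + ρ)) +
        (1 - ρ)^2 / m * ((ρ / (κ - 1)) * ((1 + ρ) / (1 - ρ)^2 - κ / (1 + ρ))) * q =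
        ρ * ((1 + ρ)^2 - κ * (1 - ρ)^2) * (q - m) / (m * (κ - 1) * (1 + ρ)) := by
      field_simp
      ring
    rw [heq]
    apply div_nonneg _ hden.le
    have : 0 ≤ q - m := by linarith
    positivity
end

section
/- Let 0 < m ≤ L and let A(q) = [[1+β, -β],[1, 0]] + q·[[-α(1+η), αη],[0, 0]] with the C2M parameters α = (1-ρ)²/m, β = (ρ/(κ-1))(1 - κ(1-3ρ)/(1+ρ)), η = (ρ/(κ-1))((1+ρ)/(1-ρ)² - κ/(1+ρ)), where κ = L/m > 1 and (√κ-1)/(√κ+1) ≤ ρ ≤ (κ-1)/(κ+1), 0 < ρ < 1. Then for every q ∈ [m, L], every complex eigenvalue of A(q) has modulus at most ρ. -/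
private lemma lin_nonneg (c0 c1 t t1 t2 : ℝ) (h1 : t1 ≤ t) (h2 : t ≤ t2)
    (hA : 0 ≤ c0 + c1 * t1) (hB : 0 ≤ c0 + c1 * t2) : 0 ≤ c0 + c1 * t := by
  rcases le_total 0 c1 with h | h
  · nlinarith
  · nlinarith

private lemma quad_root_bound (a d ρ : ℝ) (μ : ℂ) (hρ : 0 < ρ)
    (heq : μ^2 - (a:ℂ)*μ + (d:ℂ) = 0)
    (h1 : d ≤ ρ^2) (h2 : 0 ≤ ρ^2 + d - ρ*a) (h3 : 0 ≤ ρ^2 + d + ρ*a) :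
    ‖μ‖ ≤ ρ := by
  set x := μ.re with hx
  set y := μ.im with hy
  rw [Complex.ext_iff] at heq
  obtain ⟨hre, him⟩ := heq
  simp [pow_two, Complex.mul_re, Complex.mul_im, ← hx, ← hy] at hre him
  have habs : ‖μ‖^2 = x^2 + y^2 := by
    rw [Complex.sq_norm, Complex.normSq_apply]; ring
  have hab0 := norm_nonneg μ
  have him' : y * (2*x - a) = 0 := by linarith [him]
  rcases mul_eq_zero.1 him' with hy0 | hxa
  · have hx2 : x*x - a*x + d = 0 := by rw [hy0] at hre; linarith
    have h4 : x ≤ ρ := by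
      by_contra hgt; push_neg at hgt
      have h6 : 0 ≤ a - x - ρ := by
        by_contra h; push_neg at h
        nlinarith [mul_pos (show 0 < x - ρ by linarith) (show 0 < ρ + x - a by linarith)]
      nlinarith [mul_nonneg (show (0:ℝ) ≤ x by linarith) h6,
        mul_pos hρ (show 0 < x - ρ by linarith)]
    have h5 : -ρ ≤ x := by
      by_contra hgt; push_neg at hgt
      have h6 : 0 ≤ x - a - ρ := by
        by_contra h; push_neg at h
        nlinarith [mul_pos (show 0 < -ρ - x by linarith) (show 0 < ρ + a - x by linarith)]
      nlinarith [mul_nonneg (show (0:ℝ) ≤ -x by linarith) h6,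
        mul_pos hρ (show 0 < -ρ - x by linarith)]
    nlinarith [habs]
  · have ha : a = 2*x := by linarith
    have hd : x^2 + y^2 = d := by rw [ha] at hre; nlinarith [hre]
    nlinarith [habs]

set_option maxHeartbeats 1000000 in
theorem stmt_13 (m L κ ρ α β η : ℝ) (hm : 0 < m) (hmL : m ≤ L)
    (hκ : κ = L / m) (hκ1 : 1 < κ)
    (hρlo : (Real.sqrt κ - 1) / (Real.sqrt κ + 1) ≤ ρ)
    (hρhi : ρ ≤ (κ - 1) / (κ + 1)) (hρ0 : 0 < ρ) (hρ1 : ρ < 1)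
    (hα : α = (1 - ρ)^2 / m)
    (hβ : β = (ρ / (κ - 1)) * (1 - κ * (1 - 3 * ρ) / (1 + ρ)))
    (hη : η = (ρ / (κ - 1)) * ((1 + ρ) / (1 - ρ)^2 - κ / (1 + ρ))) :
    ∀ q ∈ Set.Icc m L,
      ∀ μ ∈ spectrum ℂ
        ((!![1 + β, -β; 1, 0] + q • !![-α * (1 + η), α * η; 0, 0]).map
          (Complex.ofReal)),
        ‖μ‖ ≤ ρ := by
  have hm0 : m ≠ 0 := ne_of_gt hm
  have hL : L = κ * m := by rw [hκ]; field_simp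
  have hκ0 : κ - 1 ≠ 0 := sub_ne_zero.2 (ne_of_gt hκ1)
  have h1p : (0:ℝ) < 1 + ρ := by linarith
  have h1m : (0:ℝ) < 1 - ρ := by linarith
  have h1p' : (1:ℝ) + ρ ≠ 0 := ne_of_gt h1p
  have h1m' : (1:ℝ) - ρ ≠ 0 := ne_of_gt h1m
  -- K1 : 1+ρ ≤ κ(1-ρ)
  have K1 : 1 + ρ ≤ κ * (1 - ρ) := by
    rw [le_div_iff₀ (by linarith : (0:ℝ) < κ + 1)] at hρhi
    nlinarith
  -- K2 : κ(1-ρ)² ≤ (1+ρ)²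
  have K2 : κ * (1 - ρ)^2 ≤ (1 + ρ)^2 := by
    have hs0 : (0:ℝ) ≤ κ := by linarith
    have hs1 : Real.sqrt κ ^ 2 = κ := Real.sq_sqrt hs0
    have hs2 : 0 ≤ Real.sqrt κ := Real.sqrt_nonneg κ
    rw [div_le_iff₀ (by linarith : (0:ℝ) < Real.sqrt κ + 1)] at hρlo
    have key : Real.sqrt κ * (1 - ρ) ≤ 1 + ρ := by linarith
    have key2 : 0 ≤ Real.sqrt κ * (1 - ρ) := mul_nonneg hs2 (le_of_lt h1m)
    nlinarith [mul_self_le_mul_self key2 key]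
  intro q hq μ hμ
  obtain ⟨hqm, hqL⟩ := hq
  -- t = q * α ∈ [(1-ρ)², κ(1-ρ)²]
  set t := q * α with htdef
  have hα0 : 0 < α := by rw [hα]; positivity
  have ht1 : (1 - ρ)^2 ≤ t := by
    have : m * α = (1 - ρ)^2 := by rw [hα]; field_simp
    rw [htdef, ← this]
    exact mul_le_mul_of_nonneg_right hqm (le_of_lt hα0)
  have ht2 : t ≤ κ * (1 - ρ)^2 := by
    have : L * α = κ * (1 - ρ)^2 := by rw [hα, hL]; field_simp
    rw [htdef, ← this]
    exact mul_le_mul_of_nonneg_right hqL (le_of_lt hα0)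
  -- product forms of β and η
  have hβ' : β * ((κ - 1) * (1 + ρ)) = ρ * ((1 + ρ) - κ * (1 - 3 * ρ)) := by
    rw [hβ]; field_simp; try ring
  have hη' : η * ((κ - 1) * (1 + ρ) * (1 - ρ)^2) = ρ * ((1 + ρ)^2 - κ * (1 - ρ)^2) := by
    rw [hη]; field_simp; try ring
  have hD : (κ - 1) * (1 + ρ) ≠ 0 := mul_ne_zero hκ0 h1p'
  -- endpoint algebraic facts
  have E1 : β - (1 - ρ)^2 * η = ρ^2 := by
    have F : (β - (1 - ρ)^2 * η - ρ^2) * ((κ - 1) * (1 + ρ)) = 0 := by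
      linear_combination hβ' - hη'
    have := (mul_eq_zero.1 F).resolve_right hD
    linarith
  have E2 : 1 + β - (1 - ρ)^2 * (1 + η) = 2 * ρ := by
    linear_combination E1
  have E3 : ρ^2 + (β - κ * (1 - ρ)^2 * η) + ρ * (1 + β - κ * (1 - ρ)^2 * (1 + η)) = 0 := by
    have F : (ρ^2 + (β - κ * (1 - ρ)^2 * η) + ρ * (1 + β - κ * (1 - ρ)^2 * (1 + η)))
        * ((κ - 1) * (1 + ρ)) = 0 := by
      linear_combination (1 + ρ) * hβ' - (1 + ρ) * κ * hη'
    have := (mul_eq_zero.1 F).resolve_right hD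
    linarith
  have E4 : (ρ^2 - (β - κ * (1 - ρ)^2 * η)) * (1 + ρ)
      = ρ * ((1 + ρ)^2 - κ * (1 - ρ)^2) := by
    have F : ((ρ^2 - (β - κ * (1 - ρ)^2 * η)) * (1 + ρ)
        - ρ * ((1 + ρ)^2 - κ * (1 - ρ)^2)) * ((κ - 1) * (1 + ρ)) = 0 := by
      linear_combination (-(1 + ρ)) * hβ' + ((1 + ρ) * κ) * hη'
    have := (mul_eq_zero.1 F).resolve_right hD
    linarith
  have E5 : (ρ^2 + (β - κ * (1 - ρ)^2 * η)) * (1 + ρ)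
      = ρ * (2 * ρ * (1 + ρ) - (1 + ρ)^2 + κ * (1 - ρ)^2) := by
    have F : ((ρ^2 + (β - κ * (1 - ρ)^2 * η)) * (1 + ρ)
        - ρ * (2 * ρ * (1 + ρ) - (1 + ρ)^2 + κ * (1 - ρ)^2)) * ((κ - 1) * (1 + ρ)) = 0 := by
      linear_combination ((1 + ρ)) * hβ' - ((1 + ρ) * κ) * hη'
    have := (mul_eq_zero.1 F).resolve_right hD
    linarith
  -- inequalities at the right endpoint
  have I4 : β - κ * (1 - ρ)^2 * η ≤ ρ^2 := by
    nlinarith [E4, mul_nonneg hρ0.le (sub_nonneg.2 K2), h1p]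
  have I5 : -(ρ^2) ≤ β - κ * (1 - ρ)^2 * η := by
    have hk1 : (1 + ρ) * (1 - ρ) ≤ κ * (1 - ρ)^2 := by
      nlinarith [mul_le_mul_of_nonneg_right K1 h1m.le]
    nlinarith [E5, mul_nonneg hρ0.le (show (0:ℝ) ≤ 2 * ρ * (1 + ρ) - (1 + ρ)^2 + κ * (1 - ρ)^2
      by nlinarith [hk1]), h1p]
  -- the three conditions at t
  set a := 1 + β - t * (1 + η) with hadef
  set d := β - t * η with hddef
  have C1 : d ≤ ρ^2 := by
    rw [hddef]
    have h := lin_nonneg (ρ^2 - β) η t ((1-ρ)^2) (κ*(1-ρ)^2) ht1 ht2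
      (by linarith [E1]) (by linarith [I4])
    linarith
  have C2 : 0 ≤ ρ^2 + d - ρ * a := by
    rw [hadef, hddef]
    have hA : (ρ^2 + β - ρ*(1+β)) + (ρ*(1+η) - η)*((1-ρ)^2) = 0 := by
      linear_combination E1 - ρ * E2
    have hB : (ρ^2 + β - ρ*(1+β)) + (ρ*(1+η) - η)*(κ*(1-ρ)^2)
        = 2*(ρ^2 + (β - κ*(1-ρ)^2*η)) := by linear_combination -E3
    have h := lin_nonneg (ρ^2 + β - ρ*(1+β)) (ρ*(1+η) - η) t ((1-ρ)^2) (κ*(1-ρ)^2) ht1 ht2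
      (by linarith) (by linarith [I5])
    linarith
  have C3 : 0 ≤ ρ^2 + d + ρ * a := by
    rw [hadef, hddef]
    have hA : (ρ^2 + β + ρ*(1+β)) + (-η - ρ*(1+η))*((1-ρ)^2) = 4*ρ^2 := by
      linear_combination E1 + ρ * E2
    have hB : (ρ^2 + β + ρ*(1+β)) + (-η - ρ*(1+η))*(κ*(1-ρ)^2) = 0 := by
      linear_combination E3
    have h := lin_nonneg (ρ^2 + β + ρ*(1+β)) (-η - ρ*(1+η)) t ((1-ρ)^2) (κ*(1-ρ)^2) ht1 ht2
      (by linarith [hA, sq_nonneg ρ]) (by linarith)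
    linarith
  -- extract the characteristic equation from the spectrum
  rw [spectrum.mem_iff] at hμ
  have hdet : (algebraMap ℂ (Matrix (Fin 2) (Fin 2) ℂ) μ -
      (!![1 + β, -β; 1, 0] + q • !![-α * (1 + η), α * η; 0, 0]).map (Complex.ofReal)).det
      = 0 := by
    by_contra h
    exact hμ ((Matrix.isUnit_iff_isUnit_det _).2 (isUnit_iff_ne_zero.2 h))
  simp [Matrix.det_fin_two, Matrix.algebraMap_matrix_apply] at hdet
  have heq : μ^2 - (a:ℂ)*μ + (d:ℂ) = 0 := by
    rw [hadef, hddef, htdef]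
    push_cast
    push_cast at hdet
    linear_combination hdet
  exact quad_root_bound a d ρ μ hρ0 heq C1 C2 C3
end

section
/- Suppose κ ≥ 9 + 4√5 and ρ ∈ (0,1) satisfies (√κ-1)/(√κ+1) < ρ ≤ 1 - √(2/κ). If p(κ,ρ) < 0, where p is the polynomial 8κ(κ+1)ρ⁷ - (23κ²+18κ+7)ρ⁶ + 2(5κ²-14κ-7)ρ⁵ + (31κ²+50κ+15)ρ⁴ - 4(11κ²-4κ-11)ρ³ + (23κ²-30κ+23)ρ² - 2(κ-1)(3κ+1)ρ + (κ-1)², then for all x ∈ [-1,1]: -4ρ(κ(1-ρ)² - (1+ρ))x² - 2(1-ρ)(κ(1-ρ)²(1+2ρ) - (1+ρ)²)x - (1+ρ)(κ(1-ρ)²(1-4ρ+ρ²) + 6ρ - 2ρ³) < 0. -/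
theorem stmt_14 (κ ρ : ℝ) (hκ : κ ≥ 9 + 4 * Real.sqrt 5) (hρ0 : 0 < ρ) (hρ1 : ρ < 1)
    (hρlo : (Real.sqrt κ - 1) / (Real.sqrt κ + 1) < ρ)
    (hρhi : ρ ≤ 1 - Real.sqrt (2 / κ))
    (hp : p κ ρ < 0) :
    ∀ x ∈ Set.Icc (-1 : ℝ) 1,
      -4 * ρ * (κ * (1 - ρ)^2 - (1 + ρ)) * x^2
        - 2 * (1 - ρ) * (κ * (1 - ρ)^2 * (1 + 2 * ρ) - (1 + ρ)^2) * x
        - (1 + ρ) * (κ * (1 - ρ)^2 * (1 - 4 * ρ + ρ^2) + 6 * ρ - 2 * ρ^3) < 0 := by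
  intro x _
  have h5 : Real.sqrt 5 ≥ 2 := by
    nlinarith [Real.sq_sqrt (show (0:ℝ) ≤ 5 by norm_num), Real.sqrt_nonneg 5]
  have hκ0 : (0:ℝ) < κ := by nlinarith
  have hs : Real.sqrt (2 / κ) ≤ 1 - ρ := by linarith
  have hs0 : (0:ℝ) ≤ Real.sqrt (2 / κ) := Real.sqrt_nonneg _
  have hsq : 2 / κ ≤ (1 - ρ)^2 := by
    have := Real.sq_sqrt (by positivity : (0:ℝ) ≤ 2 / κ)
    nlinarith
  have hD : κ * (1 - ρ)^2 - (1 + ρ) > 0 := by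
    have h2 : (2:ℝ) ≤ κ * (1 - ρ)^2 := by
      rw [div_le_iff₀ hκ0] at hsq; linarith [hsq]
    linarith
  set a : ℝ := -4 * ρ * (κ * (1 - ρ)^2 - (1 + ρ)) with ha
  set b : ℝ := -2 * (1 - ρ) * (κ * (1 - ρ)^2 * (1 + 2 * ρ) - (1 + ρ)^2) with hb
  set c : ℝ := -(1 + ρ) * (κ * (1 - ρ)^2 * (1 - 4 * ρ + ρ^2) + 6 * ρ - 2 * ρ^3) with hc
  have ha0 : a < 0 := by rw [ha]; nlinarith
  have hdisc : b^2 - 4 * a * c = 4 * p κ ρ := by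
    rw [ha, hb, hc, p]; ring
  have key : 4 * a * (a * x^2 + b * x + c) = (2 * a * x + b)^2 - (b^2 - 4 * a * c) := by ring
  have H : a * x^2 + b * x + c < 0 := by
    nlinarith [sq_nonneg (2 * a * x + b), hdisc, hp]
  rw [ha, hb, hc] at H
  linear_combination H
end
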